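/- Let T : [0,1] → [0,1] be a map satisfying T(x) = x + (2/log 2)·x²|log x| for all sufficiently small x > 0 (for instance the map equal to 0 at 0, to x + (2/log 2)x²|log x| on (0,1/2], and to 2x − 1 on (1/2,1]). Then for every k > 0 there exists a function f ∈ C^ω([0,1]), where ω is the concave modulus given by ω(h) = h(log(1/h^k) + 1) for h sufficiently small, such that f does not admit a continuous sub-action with respect to T. In particular, there exist locally Hölder continuous functions on [0,1] not admitting continuous sub-actions for T. -/

import Mathlib

open MeasureTheory Set Filter Topology Real

noncomputable section

/-- A `T`-invariant Borel probability measure concentrated on `[0,1]`. -/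
def InvariantProb (T : ℝ → ℝ) (μ : Measure ℝ) : Prop :=
  IsProbabilityMeasure μ ∧ μ (Set.Icc 0 1) = 1 ∧ μ.map T = μ

/-- The maximum ergodic average `m(f,T)` over invariant probability measures on `[0,1]`. -/
noncomputable def ergMax (T f : ℝ → ℝ) : ℝ :=
  sSup {r : ℝ | ∃ μ : Measure ℝ, InvariantProb T μ ∧ r = ∫ x, f x ∂μ}

/-- `u` is a sub-action for `f` with respect to `T`. -/
def IsSubaction (T f u : ℝ → ℝ) : Prop :=
  ∀ x ∈ Set.Icc (0:ℝ) 1, f x + u x - u (T x) ≤ ergMax T f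

/-- `f` belongs to `C^ω([0,1])`: a multiple of `ω` is a modulus of continuity for `f`. -/
def MemCmod (ω f : ℝ → ℝ) : Prop :=
  ∃ C > (0:ℝ), ∀ x ∈ Set.Icc (0:ℝ) 1, ∀ y ∈ Set.Icc (0:ℝ) 1, |f x - f y| ≤ C * ω |x - y|

/-- A concave modulus of continuity. -/
def ConcaveModulus (ω : ℝ → ℝ) : Prop :=
  ContinuousOn ω (Set.Ici 0) ∧ MonotoneOn ω (Set.Ici 0) ∧ ω 0 = 0 ∧
    (∀ x, 0 ≤ x → 0 ≤ ω x) ∧ ConcaveOn ℝ (Set.Ici 0) ω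

/-- `V` is regularly varying at `0` with index `σ`. -/
def RegVary0 (V : ℝ → ℝ) (σ : ℝ) : Prop :=
  ∀ t > (0:ℝ), Tendsto (fun x => V (t * x) / V x) (𝓝[>] 0) (𝓝 (t ^ σ))

/-- The modulus of continuity `ω_{α,β}`: `h^α (-log h)^{-β}` for `0 < h < h₀`, constant
for `h ≥ h₀`, and vanishing at `0`. -/
noncomputable def omegaAB (α β h₀ : ℝ) : ℝ → ℝ := fun h =>
  if h ≤ 0 then 0
  else if h < h₀ then h ^ α * (-Real.log h) ^ (-β)
  else h₀ ^ α * (-Real.log h₀) ^ (-β)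

namespace NSA

noncomputable def Gg (x : ℝ) : ℝ := (1/2) * Real.cos (Real.log x)
noncomputable def Sf (x : ℝ) : ℝ := x + (2 / Real.log 2) * x ^ (2:ℕ) * |Real.log x|
noncomputable def ff (z : ℝ) (x : ℝ) : ℝ :=
  if x ≤ 0 then 0
  else if x ≤ z then Gg (Sf x) - Gg x
  else if x ≤ 2*z then (Gg (Sf z) - Gg z) + (x - z) * ((-2 - (Gg (Sf z) - Gg z))/z)
  else -2

lemma c_pos : 0 < 2 / Real.log 2 := by positivity
lemma c_le3 : 2 / Real.log 2 ≤ 3 := by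
  rw [div_le_iff₀ (Real.log_pos one_lt_two)]; nlinarith [Real.log_two_gt_d9]

lemma cos_diff_le (a b : ℝ) : |Real.cos a - Real.cos b| ≤ |a - b| := by
  rw [Real.cos_sub_cos]
  have h2 := Real.abs_sin_le_abs (x := (a-b)/2)
  have h3 := Real.abs_sin_le_one ((a+b)/2)
  have h4 : |(a-b)/2| = |a-b|/2 := by rw [abs_div]; norm_num
  calc |(-2) * Real.sin ((a+b)/2) * Real.sin ((a-b)/2)|
      = 2 * |Real.sin ((a+b)/2)| * |Real.sin ((a-b)/2)| := by
        rw [abs_mul, abs_mul]; norm_num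
    _ ≤ |a-b| := by nlinarith [abs_nonneg (Real.sin ((a+b)/2)), abs_nonneg (Real.sin ((a-b)/2))]

lemma sin_diff_le (a b : ℝ) : |Real.sin a - Real.sin b| ≤ |a - b| := by
  rw [Real.sin_sub_sin]
  have h2 := Real.abs_sin_le_abs (x := (a-b)/2)
  have h3 := Real.abs_cos_le_one ((a+b)/2)
  have h4 : |(a-b)/2| = |a-b|/2 := by rw [abs_div]; norm_num
  calc |2 * Real.sin ((a-b)/2) * Real.cos ((a+b)/2)|
      = 2 * |Real.sin ((a-b)/2)| * |Real.cos ((a+b)/2)| := by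
        rw [abs_mul, abs_mul]; norm_num
    _ ≤ |a-b| := by nlinarith [abs_nonneg (Real.sin ((a-b)/2)), abs_nonneg (Real.cos ((a+b)/2))]

lemma Gg_diff (x y : ℝ) : |Gg x - Gg y| ≤ (1/2) * |Real.log x - Real.log y| := by
  have h : Gg x - Gg y = (1/2) * (Real.cos (Real.log x) - Real.cos (Real.log y)) := by
    rw [Gg, Gg]; ring
  rw [h, abs_mul, abs_of_pos (by norm_num : (0:ℝ) < 1/2)]
  have := cos_diff_le (Real.log x) (Real.log y)
  nlinarith [abs_nonneg (Real.log x - Real.log y)]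

lemma mono_tL {s t : ℝ} (hs : 0 < s) (hst : s ≤ t) (ht : t ≤ Real.exp (-1)) :
    s * (-Real.log s) ≤ t * (-Real.log t) := by
  have ht0 : 0 < t := lt_of_lt_of_le hs hst
  have hlog : Real.log (t/s) ≤ t/s - 1 := Real.log_le_sub_one_of_pos (by positivity)
  have hts : Real.log (t/s) = Real.log t - Real.log s := Real.log_div ht0.ne' hs.ne'
  have hlt : Real.log t ≤ -1 := by
    calc Real.log t ≤ Real.log (Real.exp (-1)) := Real.log_le_log ht0 ht
      _ = -1 := Real.log_exp _
  have h2 : s * (Real.log t - Real.log s) ≤ t - s := by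
    rw [← hts]
    calc s * Real.log (t/s) ≤ s * (t/s - 1) := by nlinarith
      _ = t - s := by field_simp
  nlinarith

lemma Sf_eq {x : ℝ} (hx : 0 < x) (hx1 : x < 1) :
    Sf x = x * (1 + (2 / Real.log 2) * (x * (-Real.log x))) := by
  have h : |Real.log x| = -Real.log x := abs_of_neg (Real.log_neg hx hx1)
  rw [Sf, h]; ring

lemma Sf_ge {x : ℝ} (hx : 0 ≤ x) : x ≤ Sf x := by
  have : 0 ≤ (2 / Real.log 2) * x ^ (2:ℕ) * |Real.log x| := by positivity
  rw [Sf]; linarith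

lemma Sf_pos {x : ℝ} (hx : 0 < x) : 0 < Sf x := lt_of_lt_of_le hx (Sf_ge hx.le)

lemma log_Sf {x : ℝ} (hx : 0 < x) (hx1 : x < 1) :
    Real.log (Sf x) = Real.log x + Real.log (1 + (2 / Real.log 2) * (x * (-Real.log x))) := by
  have hL : 0 < -Real.log x := by have := Real.log_neg hx hx1; linarith
  have h1 : (0:ℝ) < 1 + (2 / Real.log 2) * (x * (-Real.log x)) := by
    have : 0 ≤ (2 / Real.log 2) * (x * (-Real.log x)) := by positivity
    linarith
  rw [Sf_eq hx hx1, Real.log_mul hx.ne' h1.ne']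

lemma exp8_le_exp1 : Real.exp (-8) ≤ Real.exp (-1) := Real.exp_le_exp.mpr (by norm_num)
lemma exp8_lt_one : Real.exp (-8) < 1 := Real.exp_lt_one_iff.mpr (by norm_num)
lemma three_exp8 : 3 * Real.exp (-8) ≤ Real.exp (-1) := by
  have h : Real.exp (-1) = Real.exp 7 * Real.exp (-8) := by
    rw [← Real.exp_add]; norm_num
  have h7 : (8:ℝ) ≤ Real.exp 7 := by have := Real.add_one_le_exp (7:ℝ); linarith
  nlinarith [Real.exp_pos (-8)]

lemma ff_low_eq {z x : ℝ} (hx : 0 < x) (hxz : x ≤ z) :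
    ff z x = Gg (Sf x) - Gg x := by
  rw [ff, if_neg (not_le.mpr hx), if_pos hxz]

lemma absff {z x : ℝ} (hz8 : z ≤ Real.exp (-8)) (hx : 0 < x) (hxz : x ≤ z) :
    |ff z x| ≤ (3/2) * (x * (-Real.log x)) := by
  have hx1 : x < 1 := lt_of_le_of_lt (hxz.trans hz8) exp8_lt_one
  have hL : 0 < -Real.log x := by have := Real.log_neg hx hx1; linarith
  have hA : 0 ≤ (2 / Real.log 2) * (x * (-Real.log x)) := by positivity
  have htau : Real.log (1 + (2 / Real.log 2) * (x * (-Real.log x))) ≤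
      (2 / Real.log 2) * (x * (-Real.log x)) := by
    have := Real.log_le_sub_one_of_pos
      (show (0:ℝ) < 1 + (2 / Real.log 2) * (x * (-Real.log x)) by linarith)
    linarith
  have htau0 : 0 ≤ Real.log (1 + (2 / Real.log 2) * (x * (-Real.log x))) :=
    Real.log_nonneg (by linarith)
  rw [ff_low_eq hx hxz]
  have h1 := Gg_diff (Sf x) x
  rw [log_Sf hx hx1] at h1
  have h2 : |Real.log x + Real.log (1 + (2 / Real.log 2) * (x * (-Real.log x))) - Real.log x|
      = Real.log (1 + (2 / Real.log 2) * (x * (-Real.log x))) := by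
    rw [show Real.log x + Real.log (1 + (2 / Real.log 2) * (x * (-Real.log x))) - Real.log x
        = Real.log (1 + (2 / Real.log 2) * (x * (-Real.log x))) by ring]
    exact abs_of_nonneg htau0
  rw [h2] at h1
  have hc := c_le3
  nlinarith [mul_nonneg hx.le hL.le]

lemma osc (p q tx ty : ℝ) (hty0 : 0 ≤ ty) (htxty : ty ≤ tx) (hpq0 : 0 ≤ p - q) :
    |((1/2) * Real.cos (p + tx) - (1/2) * Real.cos p)
      - ((1/2) * Real.cos (q + ty) - (1/2) * Real.cos q)|
    ≤ (1/2) * (tx - ty) + (1/2) * (ty * (p - q)) := by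
  have hsplit : ((1/2) * Real.cos (p + tx) - (1/2) * Real.cos p)
      - ((1/2) * Real.cos (q + ty) - (1/2) * Real.cos q)
      = (1/2) * (Real.cos (p + tx) - Real.cos (p + ty))
        + (1/2) * ((Real.cos (p + ty) - Real.cos p) - (Real.cos (q + ty) - Real.cos q)) := by
    ring
  have hM1 : |Real.cos (p + tx) - Real.cos (p + ty)| ≤ tx - ty := by
    have h := cos_diff_le (p + tx) (p + ty)
    have harg : |p + tx - (p + ty)| = tx - ty := by
      rw [show p + tx - (p + ty) = tx - ty by ring, abs_of_nonneg (by linarith)]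
    rw [harg] at h; exact h
  have i1 : Real.cos (p + ty) - Real.cos p
      = -2 * Real.sin ((p + ty + p)/2) * Real.sin ((p + ty - p)/2) := Real.cos_sub_cos _ _
  have i2 : Real.cos (q + ty) - Real.cos q
      = -2 * Real.sin ((q + ty + q)/2) * Real.sin ((q + ty - q)/2) := Real.cos_sub_cos _ _
  have e1 : (p + ty - p)/2 = ty/2 := by ring
  have e2 : (q + ty - q)/2 = ty/2 := by ring
  rw [e1] at i1; rw [e2] at i2
  have hM2 : |(Real.cos (p + ty) - Real.cos p) - (Real.cos (q + ty) - Real.cos q)|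
      ≤ ty * (p - q) := by
    rw [i1, i2]
    have hid : -2 * Real.sin ((p + ty + p)/2) * Real.sin (ty/2)
          - (-2) * Real.sin ((q + ty + q)/2) * Real.sin (ty/2)
        = (-2) * Real.sin (ty/2) * (Real.sin ((p + ty + p)/2) - Real.sin ((q + ty + q)/2)) := by
      ring
    rw [hid]
    have hs1 : |Real.sin (ty/2)| ≤ ty/2 := by
      have h := Real.abs_sin_le_abs (x := ty/2)
      rwa [abs_of_nonneg (by linarith : (0:ℝ) ≤ ty/2)] at h
    have hs2 : |Real.sin ((p + ty + p)/2) - Real.sin ((q + ty + q)/2)| ≤ p - q := by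
      have h := sin_diff_le ((p + ty + p)/2) ((q + ty + q)/2)
      have harg : |(p + ty + p)/2 - (q + ty + q)/2| = p - q := by
        rw [show (p + ty + p)/2 - (q + ty + q)/2 = p - q by ring, abs_of_nonneg hpq0]
      rwa [harg] at h
    calc |(-2) * Real.sin (ty/2) * (Real.sin ((p + ty + p)/2) - Real.sin ((q + ty + q)/2))|
        = 2 * |Real.sin (ty/2)| * |Real.sin ((p + ty + p)/2) - Real.sin ((q + ty + q)/2)| := by
          rw [abs_mul, abs_mul]; norm_num
      _ ≤ ty * (p - q) := by
          nlinarith [abs_nonneg (Real.sin (ty/2)),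
            abs_nonneg (Real.sin ((p + ty + p)/2) - Real.sin ((q + ty + q)/2))]
  calc |((1/2) * Real.cos (p + tx) - (1/2) * Real.cos p)
      - ((1/2) * Real.cos (q + ty) - (1/2) * Real.cos q)|
      = |(1/2) * (Real.cos (p + tx) - Real.cos (p + ty))
        + (1/2) * ((Real.cos (p + ty) - Real.cos p) - (Real.cos (q + ty) - Real.cos q))| := by
        rw [hsplit]
    _ ≤ (1/2) * |Real.cos (p + tx) - Real.cos (p + ty)|
        + (1/2) * |(Real.cos (p + ty) - Real.cos p) - (Real.cos (q + ty) - Real.cos q)| := by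
        have := abs_add_le ((1/2) * (Real.cos (p + tx) - Real.cos (p + ty)))
          ((1/2) * ((Real.cos (p + ty) - Real.cos p) - (Real.cos (q + ty) - Real.cos q)))
        rw [abs_mul, abs_mul, abs_of_pos (by norm_num : (0:ℝ) < 1/2)] at this
        exact this
    _ ≤ (1/2) * (tx - ty) + (1/2) * (ty * (p - q)) := by
        have h1 := abs_nonneg (Real.cos (p + tx) - Real.cos (p + ty))
        linarith [hM1, hM2]

set_option maxHeartbeats 1600000 in
lemma low {z : ℝ} (hz : 0 < z) (hz8 : z ≤ Real.exp (-8)) {x y : ℝ} (hy0 : 0 ≤ y)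
    (hyx : y < x) (hxz : x ≤ z) :
    |ff z x - ff z y| ≤ 9 * ((x - y) * (-Real.log (x - y))) := by
  have hh : 0 < x - y := by linarith
  have hx0 : 0 < x := lt_of_le_of_lt hy0 hyx
  have hx1 : x < 1 := lt_of_le_of_lt (hxz.trans hz8) exp8_lt_one
  have hhz : x - y ≤ z := by linarith
  have hh1 : x - y < 1 := lt_of_le_of_lt hhz (lt_of_le_of_lt hz8 exp8_lt_one)
  have hLh : 0 < -Real.log (x - y) := by have := Real.log_neg hh hh1; linarith
  have hxe : x ≤ Real.exp (-1) := hxz.trans (hz8.trans exp8_le_exp1)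
  have hLx : 0 < -Real.log x := by have := Real.log_neg hx0 hx1; linarith
  have hLxh : -Real.log x ≤ -Real.log (x - y) := by
    have := Real.log_le_log hh (by linarith : x - y ≤ x); linarith
  have hhLh : 0 < (x - y) * (-Real.log (x - y)) := mul_pos hh hLh
  rcases eq_or_lt_of_le hy0 with hy0' | hy0'
  · -- y = 0
    have hfy : ff z y = 0 := by rw [ff, if_pos (le_of_eq hy0'.symm)]
    have hfx := absff hz8 hx0 hxz
    rw [hfy, sub_zero]
    have hxy : x - y = x := by rw [← hy0']; ring
    rw [hxy]
    nlinarith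
  · -- y > 0
    have hy1 : y < 1 := lt_trans hyx hx1
    have hLy : 0 < -Real.log y := by have := Real.log_neg hy0' hy1; linarith
    have hyz : y ≤ z := le_of_lt (lt_of_lt_of_le hyx hxz)
    rcases le_or_gt y (2*(x-y)) with hcase | hcase
    · -- y ≤ 2(x-y) : crude bound
      have hx3h : x ≤ 3*(x-y) := by linarith
      have h3he : 3*(x-y) ≤ Real.exp (-1) := by
        have := three_exp8
        nlinarith [hhz.trans hz8]
      have hm1 : x * (-Real.log x) ≤ (3*(x-y)) * (-Real.log (3*(x-y))) :=
        mono_tL hx0 hx3h h3he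
      have hm2 : y * (-Real.log y) ≤ x * (-Real.log x) := mono_tL hy0' hyx.le hxe
      have hL3h : -Real.log (3*(x-y)) ≤ -Real.log (x - y) := by
        have := Real.log_le_log hh (by linarith : x - y ≤ 3*(x-y)); linarith
      have hfx := absff hz8 hx0 hxz
      have hfy := absff hz8 hy0' hyz
      have htri : |ff z x - ff z y| ≤ |ff z x| + |ff z y| := abs_sub _ _
      have hL3h0 : 0 ≤ -Real.log (3*(x-y)) := by
        have h3h1 : 3*(x-y) ≤ 1 := by
          nlinarith [Real.exp_pos (-1), Real.exp_lt_one_iff.mpr (by norm_num : (-1:ℝ) < 0)]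
        have := Real.log_nonpos (by linarith) h3h1; linarith
      have hbig : (3*(x-y)) * (-Real.log (3*(x-y))) ≤ 3 * ((x-y) * (-Real.log (x-y))) := by
        have := mul_le_mul_of_nonneg_left hL3h (by linarith : (0:ℝ) ≤ x - y)
        nlinarith [this]
      linarith [htri, hfx, hfy, hm1, hm2, hbig]
    · -- y > 2(x-y)
      have hyh : x - y ≤ y := by linarith
      have hLyh : -Real.log y ≤ -Real.log (x - y) := by
        have := Real.log_le_log hh hyh; linarith
      have hqp : Real.log y ≤ Real.log x := Real.log_le_log hy0' hyx.le
      -- bounds on A, B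
      have hA0 : 0 ≤ (2 / Real.log 2) * (x * (-Real.log x)) := by positivity
      have hB0 : 0 ≤ (2 / Real.log 2) * (y * (-Real.log y)) := by positivity
      have hmono := mono_tL hy0' hyx.le hxe
      have hBA : (2 / Real.log 2) * (y * (-Real.log y))
          ≤ (2 / Real.log 2) * (x * (-Real.log x)) :=
        mul_le_mul_of_nonneg_left hmono c_pos.le
      have htyB : Real.log (1 + (2 / Real.log 2) * (y * (-Real.log y)))
          ≤ (2 / Real.log 2) * (y * (-Real.log y)) := by
        have := Real.log_le_sub_one_of_pos
          (show (0:ℝ) < 1 + (2 / Real.log 2) * (y * (-Real.log y)) by linarith)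
        linarith
      have hty0 : 0 ≤ Real.log (1 + (2 / Real.log 2) * (y * (-Real.log y))) :=
        Real.log_nonneg (by linarith)
      have htxty : Real.log (1 + (2 / Real.log 2) * (y * (-Real.log y)))
          ≤ Real.log (1 + (2 / Real.log 2) * (x * (-Real.log x))) :=
        Real.log_le_log (by linarith) (by linarith)
      -- tx - ty ≤ A - B
      have httAB : Real.log (1 + (2 / Real.log 2) * (x * (-Real.log x)))
            - Real.log (1 + (2 / Real.log 2) * (y * (-Real.log y)))
          ≤ (2 / Real.log 2) * (x * (-Real.log x))
            - (2 / Real.log 2) * (y * (-Real.log y)) := by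
        set A := (2 / Real.log 2) * (x * (-Real.log x))
        set B := (2 / Real.log 2) * (y * (-Real.log y))
        have e1 : Real.log (1+A) - Real.log (1+B) = Real.log ((1+A)/(1+B)) :=
          (Real.log_div (by linarith) (by linarith)).symm
        have e2 : Real.log ((1+A)/(1+B)) ≤ (1+A)/(1+B) - 1 :=
          Real.log_le_sub_one_of_pos (by positivity)
        have e3 : (1+A)/(1+B) - 1 ≤ A - B := by
          rw [div_sub_one (by positivity : (1:ℝ)+B ≠ 0)]
          have : (1+A) - (1+B) = A - B := by ring
          rw [this]
          exact div_le_self (by linarith) (by linarith)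
        linarith [e1 ▸ e2]
      -- A - B ≤ 3 (x-y)(-log(x-y))
      have key : x * (-Real.log x) - y * (-Real.log y) ≤ (x - y) * (-Real.log x) := by
        have he : x * (-Real.log x) - y * (-Real.log y)
            = (x - y) * (-Real.log x) + y * (Real.log y - Real.log x) := by ring
        have hyneg : y * (Real.log y - Real.log x) ≤ 0 :=
          mul_nonpos_of_nonneg_of_nonpos hy0'.le (by linarith)
        linarith [he]
      have hABh : (2 / Real.log 2) * (x * (-Real.log x))
            - (2 / Real.log 2) * (y * (-Real.log y))
          ≤ 3 * ((x - y) * (-Real.log (x - y))) := by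
        have h1 : (2 / Real.log 2) * (x * (-Real.log x) - y * (-Real.log y))
            ≤ 3 * (x * (-Real.log x) - y * (-Real.log y)) :=
          mul_le_mul_of_nonneg_right c_le3 (by linarith)
        have h2 : (x - y) * (-Real.log x) ≤ (x - y) * (-Real.log (x - y)) :=
          mul_le_mul_of_nonneg_left hLxh hh.le
        have h1' : (2 / Real.log 2) * (x * (-Real.log x))
              - (2 / Real.log 2) * (y * (-Real.log y))
            = (2 / Real.log 2) * (x * (-Real.log x) - y * (-Real.log y)) := by ring
        have h3 : 3 * (x * (-Real.log x) - y * (-Real.log y))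
            ≤ 3 * ((x - y) * (-Real.log x)) := by linarith [key]
        linarith [h1', h1, h3, h2]
      -- p - q ≤ (x-y)/y
      have hpq : Real.log x - Real.log y ≤ (x - y)/y := by
        have e1 : Real.log x - Real.log y = Real.log (x/y) :=
          (Real.log_div hx0.ne' hy0'.ne').symm
        have e2 : Real.log (x/y) ≤ x/y - 1 := Real.log_le_sub_one_of_pos (by positivity)
        have e3 : x/y - 1 = (x-y)/y := by field_simp
        linarith [e1 ▸ e2, e3 ▸ e2]
      -- rewrite ff values
      have hfx : ff z x = (1/2) * Real.cos (Real.log x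
            + Real.log (1 + (2 / Real.log 2) * (x * (-Real.log x))))
          - (1/2) * Real.cos (Real.log x) := by
        rw [ff_low_eq hx0 hxz, Gg, Gg, log_Sf hx0 hx1]
      have hfy : ff z y = (1/2) * Real.cos (Real.log y
            + Real.log (1 + (2 / Real.log 2) * (y * (-Real.log y))))
          - (1/2) * Real.cos (Real.log y) := by
        rw [ff_low_eq hy0' hyz, Gg, Gg, log_Sf hy0' hy1]
      have hosc := osc (Real.log x) (Real.log y)
        (Real.log (1 + (2 / Real.log 2) * (x * (-Real.log x))))
        (Real.log (1 + (2 / Real.log 2) * (y * (-Real.log y))))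
        hty0 htxty (by linarith)
      rw [← hfx, ← hfy] at hosc
      -- final combination
      have hty_pq : Real.log (1 + (2 / Real.log 2) * (y * (-Real.log y)))
            * (Real.log x - Real.log y)
          ≤ 3 * ((x - y) * (-Real.log (x - y))) := by
        have h1 : Real.log (1 + (2 / Real.log 2) * (y * (-Real.log y)))
              * (Real.log x - Real.log y)
            ≤ ((2 / Real.log 2) * (y * (-Real.log y))) * ((x - y)/y) :=
          mul_le_mul htyB hpq (by linarith) hB0
        have h2 : ((2 / Real.log 2) * (y * (-Real.log y))) * ((x - y)/y)
            = (2 / Real.log 2) * ((-Real.log y) * (x - y)) := by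
          field_simp
        have h3 : (2 / Real.log 2) * ((-Real.log y) * (x - y))
            ≤ 3 * ((-Real.log y) * (x - y)) :=
          mul_le_mul_of_nonneg_right c_le3 (by positivity)
        have h4 : (-Real.log y) * (x - y) ≤ (-Real.log (x-y)) * (x - y) :=
          mul_le_mul_of_nonneg_right hLyh hh.le
        have h5 : 3 * ((-Real.log y) * (x - y)) ≤ 3 * ((-Real.log (x-y)) * (x - y)) := by
          linarith
        have h6 : 3 * ((-Real.log (x-y)) * (x - y)) = 3 * ((x - y) * (-Real.log (x - y))) := by
          ring
        linarith [h1, h2, h3, h5, h6]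
      linarith [hosc, httAB, hABh, hty_pq]

lemma Gg_abs (x : ℝ) : |Gg x| ≤ 1/2 := by
  rw [Gg, abs_mul]
  have := Real.abs_cos_le_one (Real.log x)
  rw [abs_of_pos (by norm_num : (0:ℝ) < 1/2)]
  nlinarith

lemma Gg_le (x : ℝ) : Gg x ≤ 1/2 := (abs_le.mp (Gg_abs x)).2
lemma Gg_ge (x : ℝ) : -(1/2) ≤ Gg x := by have := (abs_le.mp (Gg_abs x)).1; linarith

-- high region: f on [z, 1]
lemma fz_nonpos {z : ℝ} (hcos : Real.cos (Real.log z) = 1) : Gg (Sf z) - Gg z ≤ 0 := by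
  have h1 : Gg z = 1/2 := by rw [Gg, hcos]; norm_num
  have := Gg_le (Sf z); linarith

lemma fz_gem1 {z : ℝ} (hcos : Real.cos (Real.log z) = 1) : -1 ≤ Gg (Sf z) - Gg z := by
  have h1 : Gg z = 1/2 := by rw [Gg, hcos]; norm_num
  have := Gg_ge (Sf z); linarith

lemma ff_ramp_eq {z x : ℝ} (h1 : z < x) (h2 : x ≤ 2*z) :
    ff z x = (Gg (Sf z) - Gg z) + (x - z) * ((-2 - (Gg (Sf z) - Gg z))/z) := by
  have hz : 0 < z := by nlinarith
  rw [ff, if_neg (by push_neg; linarith), if_neg (not_le.mpr h1), if_pos h2]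

lemma ff_eq_neg2 {z x : ℝ} (hz : 0 < z) (hx : 2*z ≤ x) : ff z x = -2 := by
  have hzx : z < x := by linarith
  rcases eq_or_lt_of_le hx with he | hlt
  · rw [ff_ramp_eq hzx (le_of_eq he.symm), ← he]
    field_simp
    ring
  · rw [ff, if_neg (by push_neg; linarith), if_neg (not_le.mpr hzx), if_neg (not_le.mpr hlt)]

lemma ff_nonpos_hi {z x : ℝ} (hz : 0 < z) (hcos : Real.cos (Real.log z) = 1)
    (hzx : z < x) : ff z x ≤ 0 := by
  rcases le_or_gt x (2*z) with h2 | h2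
  · rw [ff_ramp_eq hzx h2]
    have hfz0 := fz_nonpos (z := z) hcos
    have hfzm := fz_gem1 (z := z) hcos
    have hterm : (x - z) * ((-2 - (Gg (Sf z) - Gg z))/z) ≤ 0 := by
      apply mul_nonpos_of_nonneg_of_nonpos (by linarith)
      apply div_nonpos_of_nonpos_of_nonneg (by linarith) hz.le
    linarith
  · rw [ff_eq_neg2 hz (by linarith)]; norm_num

lemma ff_abs_le {z : ℝ} (hz : 0 < z) (hcos : Real.cos (Real.log z) = 1) (x : ℝ) :
    |ff z x| ≤ 2 := by
  rcases le_or_gt x 0 with h0 | h0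
  · rw [ff, if_pos h0]; norm_num
  · rcases le_or_gt x z with hxz | hxz
    · rw [ff_low_eq h0 hxz]
      have h1 := Gg_abs (Sf x); have h2 := Gg_abs x
      rw [abs_le] at h1 h2 ⊢
      constructor <;> [linarith [h1.1, h2.2]; linarith [h1.2, h2.1]]
    · rcases le_or_gt x (2*z) with h2z | h2z
      · rw [ff_ramp_eq hxz h2z]
        have hfz0 := fz_nonpos hcos
        have hfzm := fz_gem1 hcos
        rw [abs_le]
        have he : (x - z) * ((-2 - (Gg (Sf z) - Gg z))/z)
            = ((x-z)/z) * (-2 - (Gg (Sf z) - Gg z)) := by ring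
        have hθ0 : 0 ≤ (x-z)/z := div_nonneg (by linarith) hz.le
        have hθ1 : (x-z)/z ≤ 1 := by rw [div_le_one hz]; linarith
        constructor
        · rw [he]; nlinarith
        · rw [he]; nlinarith
      · rw [ff_eq_neg2 hz (by linarith)]; norm_num

lemma high {z : ℝ} (hz : 0 < z) (hcos : Real.cos (Real.log z) = 1) {x y : ℝ}
    (hzy : z ≤ y) (hyx : y ≤ x) :
    |ff z x - ff z y| ≤ (3/z) * (x - y) := by
  have hfz0 := fz_nonpos (z := z) hcos
  have hfzm := fz_gem1 (z := z) hcos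
  have hval : ∀ t, z ≤ t → ff z t = (Gg (Sf z) - Gg z)
      + (min t (2*z) - z) * ((-2 - (Gg (Sf z) - Gg z))/z) := by
    intro t ht
    rcases eq_or_lt_of_le ht with he | hlt
    · rw [← he, ff_low_eq hz le_rfl, min_eq_left (by linarith : z ≤ 2*z)]
      ring
    · rcases le_or_gt t (2*z) with h2 | h2
      · rw [ff_ramp_eq hlt h2, min_eq_left h2]
      · rw [ff_eq_neg2 hz h2.le, min_eq_right h2.le]
        field_simp
        ring
  rw [hval x (hzy.trans hyx), hval y hzy]
  have hmin0 : 0 ≤ min x (2*z) - min y (2*z) := by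
    have := min_le_min hyx (le_refl (2*z)); linarith
  have hmin1 : min x (2*z) - min y (2*z) ≤ x - y := by
    rcases le_total x (2*z) with h1 | h1
    · rw [min_eq_left h1, min_eq_left (hyx.trans h1)]
    · rcases le_total y (2*z) with h2 | h2
      · rw [min_eq_right h1, min_eq_left h2]; linarith
      · rw [min_eq_right h1, min_eq_right h2]; linarith
  have hnum : |(-2 - (Gg (Sf z) - Gg z))| ≤ 3 := by
    rw [abs_le]; constructor <;> linarith
  have hslope : |(-2 - (Gg (Sf z) - Gg z))/z| ≤ 3/z := by
    rw [abs_div, abs_of_pos hz]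
    gcongr
  have heq : (Gg (Sf z) - Gg z) + (min x (2*z) - z) * ((-2 - (Gg (Sf z) - Gg z))/z)
      - ((Gg (Sf z) - Gg z) + (min y (2*z) - z) * ((-2 - (Gg (Sf z) - Gg z))/z))
      = (min x (2*z) - min y (2*z)) * ((-2 - (Gg (Sf z) - Gg z))/z) := by ring
  rw [heq, abs_mul]
  calc |min x (2*z) - min y (2*z)| * |(-2 - (Gg (Sf z) - Gg z))/z|
      ≤ (x - y) * (3/z) := by
        apply mul_le_mul _ hslope (abs_nonneg _) (by linarith)
        rw [abs_of_nonneg hmin0]; exact hmin1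
    _ = (3/z) * (x - y) := by ring

lemma two_z_le_one {z : ℝ} (hz8 : z ≤ Real.exp (-8)) (hz : 0 < z) : 2*z ≤ 1 := by
  have h := exp8_le_exp1
  have h1 : Real.exp (-1) < 1 := Real.exp_lt_one_iff.mpr (by norm_num)
  have h2 : 3 * Real.exp (-8) ≤ Real.exp (-1) := three_exp8
  nlinarith [Real.exp_pos (-8)]

lemma memcmod {z δI k : ℝ} {ω : ℝ → ℝ} (hz : 0 < z) (hz8 : z ≤ Real.exp (-8))
    (hcos : Real.cos (Real.log z) = 1) (hk : 0 < k) (hω : ConcaveModulus ω)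
    (hωf : ∀ h ∈ Set.Ioo (0:ℝ) δI, ω h = h * (Real.log (1 / h ^ k) + 1))
    (hzδ : z < δI) : MemCmod ω (ff z) := by
  obtain ⟨hωc, hωmono, hω0, hωnn, hωcc⟩ := hω
  -- formula facts
  have hform : ∀ h : ℝ, 0 < h → h ≤ z → ω h = h * (k * (-Real.log h) + 1) := by
    intro h h0 hhz
    have := hωf h ⟨h0, lt_of_le_of_lt hhz hzδ⟩
    rw [this]
    have : Real.log (1 / h ^ k) = k * (-Real.log h) := by
      rw [one_div, Real.log_inv, Real.log_rpow h0]; ring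
    rw [this]
  have hLpos : ∀ h : ℝ, 0 < h → h ≤ z → 0 < -Real.log h := by
    intro h h0 hhz
    have h1 : h < 1 := lt_of_le_of_lt (hhz.trans hz8) exp8_lt_one
    have := Real.log_neg h0 h1; linarith
  have hω_ge_h : ∀ h : ℝ, 0 < h → h ≤ z → h ≤ ω h := by
    intro h h0 hhz
    rw [hform h h0 hhz]
    have := hLpos h h0 hhz
    nlinarith [mul_pos h0 (mul_pos hk this)]
  have hω_ge_L : ∀ h : ℝ, 0 < h → h ≤ z → k * (h * (-Real.log h)) ≤ ω h := by
    intro h h0 hhz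
    rw [hform h h0 hhz]
    nlinarith
  have hωz : 0 < ω z := lt_of_lt_of_le hz (hω_ge_h z hz le_rfl)
  refine ⟨4/(ω z) + 9/k + 3/z, by positivity, ?_⟩
  have key : ∀ a ∈ Set.Icc (0:ℝ) 1, ∀ b ∈ Set.Icc (0:ℝ) 1, b < a →
      |ff z a - ff z b| ≤ (4/(ω z) + 9/k + 3/z) * ω (a - b) := by
    rintro a ⟨ha0, ha1⟩ b ⟨hb0, hb1⟩ hba
    have hh0 : 0 < a - b := by linarith
    have hωh0 : 0 ≤ ω (a - b) := hωnn _ hh0.le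
    rcases le_or_gt z (a - b) with hbig | hsmall
    · -- big increments
      have hωle : ω z ≤ ω (a - b) := hωmono (Set.mem_Ici.mpr hz.le) (Set.mem_Ici.mpr hh0.le) hbig
      have h4 : |ff z a - ff z b| ≤ 4 := by
        have h1 := ff_abs_le hz hcos a
        have h2 := ff_abs_le hz hcos b
        have := abs_sub (ff z a) (ff z b)
        linarith
      have hc1 : 4 = (4/(ω z)) * ω z := by field_simp
      have hc2 : (4/(ω z)) * ω z ≤ (4/(ω z)) * ω (a - b) :=
        mul_le_mul_of_nonneg_left hωle (by positivity)
      nlinarith [mul_nonneg (le_of_lt (show (0:ℝ) < 9/k by positivity)) hωh0,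
        mul_nonneg (le_of_lt (show (0:ℝ) < 3/z by positivity)) hωh0]
    · -- small increments
      have hωgeh := hω_ge_h _ hh0 hsmall.le
      have hωgeL := hω_ge_L _ hh0 hsmall.le
      have hnn1 : 0 ≤ (4/(ω z)) * ω (a - b) := mul_nonneg (by positivity) hωh0
      rcases le_or_gt a z with haz | haz
      · -- both low
        have hl := low hz hz8 hb0 hba haz
        have h9 : 9 * ((a-b) * (-Real.log (a-b))) ≤ (9/k) * ω (a - b) := by
          have : (9/k) * (k * ((a-b) * (-Real.log (a-b)))) = 9 * ((a-b) * (-Real.log (a-b))) := by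
            field_simp
          nlinarith [mul_le_mul_of_nonneg_left hωgeL (le_of_lt (show (0:ℝ) < 9/k by positivity))]
        nlinarith [mul_nonneg (le_of_lt (show (0:ℝ) < 3/z by positivity)) hωh0]
      · rcases le_or_gt z b with hzb | hzb
        · -- both high
          have hhigh := high hz hcos hzb hba.le
          have h3 : (3/z) * (a - b) ≤ (3/z) * ω (a - b) :=
            mul_le_mul_of_nonneg_left hωgeh (by positivity)
          nlinarith [mul_nonneg (le_of_lt (show (0:ℝ) < 9/k by positivity)) hωh0]
        · -- straddle: b < z < a
          have hlow := low hz hz8 hb0 hzb le_rfl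
          have hhigh := high hz hcos (le_refl z) haz.le
          have htri : |ff z a - ff z b| ≤ |ff z a - ff z z| + |ff z z - ff z b| := by
            rw [show ff z a - ff z b = (ff z a - ff z z) + (ff z z - ff z b) by ring]
            exact abs_add_le _ _
          have hmz : (z - b) * (-Real.log (z - b)) ≤ (a-b) * (-Real.log (a-b)) := by
            apply mono_tL (by linarith) (by linarith)
            calc a - b ≤ z := hsmall.le
              _ ≤ Real.exp (-8) := hz8
              _ ≤ Real.exp (-1) := exp8_le_exp1
          have h9 : 9 * ((a-b) * (-Real.log (a-b))) ≤ (9/k) * ω (a - b) := by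
            have : (9/k) * (k * ((a-b) * (-Real.log (a-b)))) = 9 * ((a-b) * (-Real.log (a-b))) := by
              field_simp
            nlinarith [mul_le_mul_of_nonneg_left hωgeL (le_of_lt (show (0:ℝ) < 9/k by positivity))]
          have h3 : (3/z) * (a - z) ≤ (3/z) * ω (a - b) := by
            apply mul_le_mul_of_nonneg_left _ (by positivity)
            calc a - z ≤ a - b := by linarith
              _ ≤ ω (a - b) := hωgeh
          nlinarith [hlow, hhigh, htri, hmz, h9, h3]
  intro x hx y hy
  rcases lt_trichotomy x y with hlt | heq | hgt
  · have h := key y hy x hx hlt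
    have e1 : |ff z x - ff z y| = |ff z y - ff z x| := abs_sub_comm _ _
    have e2 : |x - y| = y - x := by
      rw [abs_sub_comm x y, abs_of_pos (by linarith : (0:ℝ) < y - x)]
    rw [e1, e2]; exact h
  · simp only [heq, sub_self, abs_zero, hω0, mul_zero, le_refl]
  · have h := key x hx y hy hgt
    rwa [abs_of_pos (by linarith : (0:ℝ) < x - y)]

noncomputable def Pp (z : ℝ) (x : ℝ) : ℝ :=
  if x ≤ 0 then -(1/2) else if x ≤ z then Gg x else 1/2

lemma Gg_meas : Measurable Gg := by
  have : Measurable fun x : ℝ => Real.cos (Real.log x) :=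
    Real.continuous_cos.measurable.comp Real.measurable_log
  exact this.const_mul (1/2)

lemma Sf_meas : Measurable Sf := by
  have h1 : Measurable fun x : ℝ => x ^ (2:ℕ) := measurable_id.pow_const 2
  have h2 : Measurable fun x : ℝ => |Real.log x| := Real.measurable_log.abs
  exact measurable_id.add (((h1.const_mul (2 / Real.log 2)).mul h2))

lemma ff_meas (z : ℝ) : Measurable (ff z) := by
  unfold ff
  apply Measurable.ite (measurableSet_Iic (a := (0:ℝ))) measurable_const
  apply Measurable.ite (measurableSet_Iic (a := z))
  · exact (Gg_meas.comp Sf_meas).sub Gg_meas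
  apply Measurable.ite (measurableSet_Iic (a := 2*z))
  · exact measurable_const.add ((measurable_id.sub measurable_const).mul_const _)
  · exact measurable_const

lemma Pp_meas (z : ℝ) : Measurable (Pp z) := by
  unfold Pp
  apply Measurable.ite (measurableSet_Iic (a := (0:ℝ))) measurable_const
  exact Measurable.ite (measurableSet_Iic (a := z)) Gg_meas measurable_const

lemma Pp_ge (z t : ℝ) : -(1/2) ≤ Pp z t := by
  rw [Pp]; split_ifs
  · exact le_rfl
  · exact Gg_ge t
  · norm_num

lemma Pp_abs (z t : ℝ) : |Pp z t| ≤ 1/2 := by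
  rw [Pp]; split_ifs
  · norm_num [abs_le]
  · exact Gg_abs t
  · norm_num [abs_le]

lemma ff_eq_zero {z x : ℝ} (h : x ≤ 0) : ff z x = 0 := by rw [ff, if_pos h]

lemma Pp_eq_neg {z x : ℝ} (h : x ≤ 0) : Pp z x = -(1/2) := by rw [Pp, if_pos h]

lemma Pp_eq_G {z x : ℝ} (h0 : 0 < x) (h : x ≤ z) : Pp z x = Gg x := by
  rw [Pp, if_neg (not_le.mpr h0), if_pos h]

lemma Pp_eq_half {z x : ℝ} (hz : 0 < z) (h : z < x) : Pp z x = 1/2 := by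
  rw [Pp, if_neg (not_le.mpr (lt_trans hz h)), if_neg (not_le.mpr h)]

lemma ff_le_coboundary {T : ℝ → ℝ} {eps z : ℝ}
    (hT : ∀ x ∈ Set.Ioo (0:ℝ) eps, T x = Sf x) (hz : 0 < z) (hz8 : z ≤ Real.exp (-8))
    (hcos : Real.cos (Real.log z) = 1) (h2z : 2*z ≤ eps) :
    ∀ x ∈ Set.Icc (0:ℝ) 1, ff z x ≤ Pp z (T x) - Pp z x := by
  rintro x ⟨hx0, hx1⟩
  have hzeps : z < eps := by linarith
  rcases le_or_gt x 0 with h0 | h0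
  · rw [ff_eq_zero h0, Pp_eq_neg h0]
    have := Pp_ge z (T x); linarith
  · rcases le_or_gt x z with hxz | hxz
    · rw [ff_low_eq h0 hxz]
      have hTx : T x = Sf x := hT x ⟨h0, lt_of_le_of_lt hxz hzeps⟩
      rw [hTx, Pp_eq_G h0 hxz]
      have hSpos : 0 < Sf x := Sf_pos h0
      rcases le_or_gt (Sf x) z with hS | hS
      · rw [Pp_eq_G hSpos hS]
      · rw [Pp_eq_half hz hS]
        have := Gg_le (Sf x); linarith
    · have hPx : Pp z x = 1/2 := Pp_eq_half hz hxz
      rcases lt_or_ge x eps with hxe | hxe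
      · have hTx : T x = Sf x := hT x ⟨h0, hxe⟩
        have hSgt : z < T x := by
          rw [hTx]; exact lt_of_lt_of_le hxz (Sf_ge h0.le)
        have hPT : Pp z (T x) = 1/2 := Pp_eq_half hz hSgt
        rw [hPx, hPT]
        have := ff_nonpos_hi hz hcos hxz
        linarith
      · have h2zx : 2*z ≤ x := le_trans h2z hxe
        rw [ff_eq_neg2 hz h2zx, hPx]
        have := Pp_ge z (T x); linarith

lemma erg_nonpos {T : ℝ → ℝ} {eps z : ℝ}
    (hT : ∀ x ∈ Set.Ioo (0:ℝ) eps, T x = Sf x) (hz : 0 < z) (hz8 : z ≤ Real.exp (-8))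
    (hcos : Real.cos (Real.log z) = 1) (h2z : 2*z ≤ eps) :
    ergMax T (ff z) ≤ 0 := by
  unfold ergMax
  apply Real.sSup_le _ le_rfl
  rintro r ⟨μ, ⟨hP, hI, hM⟩, rfl⟩
  haveI := hP
  have hTae : AEMeasurable T μ := by
    by_contra hc
    have h0 : μ.map T = 0 := Measure.map_of_not_aemeasurable hc
    rw [h0] at hM
    have h1 : μ Set.univ = 0 := by rw [← hM]; rfl
    rw [measure_univ] at h1
    exact one_ne_zero h1
  have haeI : ∀ᵐ x ∂μ, x ∈ Set.Icc (0:ℝ) 1 := by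
    have hc : μ (Set.Icc (0:ℝ) 1)ᶜ = 0 := by
      rw [measure_compl measurableSet_Icc (measure_ne_top μ _), hI, measure_univ]
      simp
    rw [ae_iff]
    exact hc
  have hint_f : Integrable (ff z) μ := by
    apply ((integrable_const (2:ℝ)).mono' (ff_meas z).aestronglyMeasurable)
    apply ae_of_all
    intro x
    rw [Real.norm_eq_abs]
    exact ff_abs_le hz hcos x
  have hint_P : Integrable (Pp z) μ := by
    apply ((integrable_const ((1:ℝ)/2)).mono' (Pp_meas z).aestronglyMeasurable)
    apply ae_of_all
    intro x
    rw [Real.norm_eq_abs]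
    exact Pp_abs z x
  have hint_PT : Integrable (fun x => Pp z (T x)) μ := by
    apply ((integrable_const ((1:ℝ)/2)).mono'
      ((Pp_meas z).comp_aemeasurable hTae).aestronglyMeasurable)
    apply ae_of_all
    intro x
    rw [Real.norm_eq_abs]
    exact Pp_abs z (T x)
  have hmono : ∫ x, ff z x ∂μ ≤ ∫ x, (Pp z (T x) - Pp z x) ∂μ := by
    apply integral_mono_ae hint_f (hint_PT.sub hint_P)
    exact haeI.mono (ff_le_coboundary hT hz hz8 hcos h2z)
  have hzero : ∫ x, (Pp z (T x) - Pp z x) ∂μ = 0 := by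
    rw [integral_sub hint_PT hint_P]
    have h1 : ∫ x, Pp z (T x) ∂μ = ∫ y, Pp z y ∂(μ.map T) :=
      (integral_map hTae (Pp_meas z).aestronglyMeasurable).symm
    rw [h1, hM, sub_self]
  linarith

lemma exp_neg8_le : Real.exp (-8) ≤ 1/81 := by
  have h1 : Real.exp (-8) = (Real.exp 8)⁻¹ := by rw [← Real.exp_neg]
  have h2 : Real.exp 8 = (Real.exp 2)^(4:ℕ) := by
    rw [← Real.exp_nat_mul]; norm_num
  have h3 : (3:ℝ) ≤ Real.exp 2 := by have := Real.add_one_le_exp (2:ℝ); linarith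
  have h4 : (81:ℝ) ≤ (Real.exp 2)^(4:ℕ) := by
    have h5 := pow_le_pow_left₀ (by norm_num : (0:ℝ) ≤ 3) h3 4
    norm_num at h5 ⊢
    linarith
  rw [h1, h2]
  rw [inv_le_comm₀ (by positivity) (by norm_num)]
  norm_num
  linarith

set_option maxHeartbeats 1600000 in
lemma no_subaction {T : ℝ → ℝ} {eps z : ℝ} {u : ℝ → ℝ} {M : ℕ}
    (hTf : ∀ x ∈ Set.Ioo (0:ℝ) eps, T x = Sf x)
    (hz : 0 < z) (hz8 : z ≤ Real.exp (-8)) (hzw : Real.log z = -(2*Real.pi*M))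
    (h2z : 2*z ≤ eps)
    (hu : ContinuousOn u (Set.Icc 0 1))
    (hsub : ∀ x ∈ Set.Icc (0:ℝ) 1, ff z x + u x - u (T x) ≤ ergMax T (ff z)) :
    False := by
  have hπ := Real.pi_pos
  have hπ3 := Real.pi_gt_three
  have hcosz : Real.cos (Real.log z) = 1 := by
    rw [hzw]
    rw [show -(2*Real.pi*(M:ℝ)) = ((-(M:ℤ) : ℤ) : ℝ) * (2*Real.pi) by push_cast; ring]
    exact Real.cos_int_mul_two_pi _
  have hm : ergMax T (ff z) ≤ 0 := erg_nonpos hTf hz hz8 hcosz h2z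
  have hz1 : z < 1 := lt_of_le_of_lt hz8 exp8_lt_one
  have hzeps : z < eps := by linarith
  -- continuity at 0
  have hc0 : ContinuousWithinAt u (Set.Icc 0 1) 0 :=
    hu 0 (by constructor <;> norm_num)
  obtain ⟨ρ, hρ0, hρ⟩ := Metric.continuousWithinAt_iff.mp hc0 (3/16) (by norm_num)
  -- choose the depth parameter t
  obtain ⟨t0, ht0⟩ := exists_nat_gt ((Real.log z + Real.pi/3 - Real.log ρ) / (2*Real.pi))
  have hT0 : Real.log z + Real.pi/3 - Real.log ρ < t0 * (2*Real.pi) :=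
    (div_lt_iff₀ (by positivity)).mp ht0
  -- abbreviations
  have hw := hzw
  set t : ℕ := t0 + 1 with ht_def
  have htR : (t:ℝ) = (t0:ℝ) + 1 := by rw [ht_def]; push_cast; ring
  set a := Real.exp (Real.log z - 2*Real.pi*t - Real.pi) with ha_def
  set Pm := Real.exp (Real.log z - 2*Real.pi*t - Real.pi/3) with hPm_def
  set Pb := Real.exp (Real.log z - 2*Real.pi*t + Real.pi/3) with hPb_def
  have ha0 : 0 < a := Real.exp_pos _
  have haPm : a < Pm := Real.exp_lt_exp.mpr (by linarith)
  have hPmPb : Pm < Pb := Real.exp_lt_exp.mpr (by linarith)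
  have hPbz : Pb < z := by
    have : Real.log z - 2*Real.pi*t + Real.pi/3 < Real.log z := by
      have ht1 : (1:ℝ) ≤ (t:ℝ) := by
        rw [htR]; linarith [(Nat.cast_nonneg t0 : (0:ℝ) ≤ (t0:ℝ))]
      nlinarith
    calc Pb < Real.exp (Real.log z) := Real.exp_lt_exp.mpr this
      _ = z := Real.exp_log hz
  have hPbρ : Pb < ρ := by
    have harg : Real.log z - 2*Real.pi*t + Real.pi/3 < Real.log ρ := by
      have h2 : (t0:ℝ) * (2*Real.pi) < 2*Real.pi*t := by rw [htR]; nlinarith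
      linarith
    calc Pb < Real.exp (Real.log ρ) := Real.exp_lt_exp.mpr harg
      _ = ρ := Real.exp_log hρ0
  -- step estimates
  have hstep : ∀ v : ℝ, 0 < v → v ≤ Pm →
      T v = Sf v ∧ 0 < T v ∧ v ≤ T v ∧ T v ≤ Pb := by
    intro v hv0 hvP
    have hvz : v < z := lt_of_le_of_lt hvP (lt_trans hPmPb hPbz)
    have hveps : v < eps := lt_trans hvz hzeps
    have hTv : T v = Sf v := hTf v ⟨hv0, hveps⟩
    have hv1 : v < 1 := lt_trans hvz hz1
    have hLv : 0 < -Real.log v := by have := Real.log_neg hv0 hv1; linarith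
    have hA0 : 0 ≤ (2/Real.log 2) * (v * (-Real.log v)) := by positivity
    have hsf : Sf v = v * (1 + (2/Real.log 2) * (v * (-Real.log v))) := Sf_eq hv0 hv1
    have hmon : v * (-Real.log v) ≤ Real.exp (-8) * 8 := by
      have h1 := mono_tL hv0 (le_of_lt (lt_of_lt_of_le hvz hz8)) exp8_le_exp1
      rw [Real.log_exp] at h1
      linarith
    have hA13 : (2/Real.log 2) * (v * (-Real.log v)) ≤ 1/3 := by
      have h81 := exp_neg8_le
      have hvL0 : 0 ≤ v * (-Real.log v) := by positivity
      have hs1 : (2/Real.log 2) * (v * (-Real.log v)) ≤ 3 * (v * (-Real.log v)) :=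
        mul_le_mul_of_nonneg_right c_le3 hvL0
      have hs2 : (3:ℝ) * (v * (-Real.log v)) ≤ 3 * (Real.exp (-8) * 8) := by linarith
      have hs3 : (3:ℝ) * (Real.exp (-8) * 8) ≤ 3 * ((1/81) * 8) := by
        nlinarith
      linarith
    have hpos : 0 < T v := by
      rw [hTv, hsf]; positivity
    have hge : v ≤ T v := by rw [hTv]; exact Sf_ge hv0.le
    have hle : T v ≤ Pb := by
      have hPb_eq : Pb = Pm * Real.exp (2*Real.pi/3) := by
        rw [hPb_def, hPm_def, ← Real.exp_add]; ring_nf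
      have hexp23 : (4:ℝ)/3 ≤ Real.exp (2*Real.pi/3) := by
        have := Real.add_one_le_exp (2*Real.pi/3)
        nlinarith
      have h1 : T v ≤ Pm * (4/3) := by
        rw [hTv, hsf]
        have : v * (1 + (2/Real.log 2) * (v * (-Real.log v))) ≤ v * (4/3) := by
          apply mul_le_mul_of_nonneg_left _ hv0.le
          linarith
        nlinarith
      have hPm0 : 0 < Pm := Real.exp_pos _
      calc T v ≤ Pm * (4/3) := h1
        _ ≤ Pm * Real.exp (2*Real.pi/3) := mul_le_mul_of_nonneg_left hexp23 hPm0.le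
        _ = Pb := hPb_eq.symm
    exact ⟨hTv, hpos, hge, hle⟩
  -- orbit invariants
  have horb : ∀ n : ℕ, (∀ i : ℕ, i < n → T^[i] a ≤ Pm) →
      0 < T^[n] a ∧ a ≤ T^[n] a ∧ T^[n] a ≤ Pb := by
    intro n
    induction n with
    | zero =>
      intro _
      simp only [Function.iterate_zero, id_eq]
      exact ⟨ha0, le_rfl, le_of_lt (lt_trans haPm hPmPb)⟩
    | succ n ih =>
      intro hP
      have hPn : ∀ i, i < n → T^[i] a ≤ Pm := fun i hi => hP i (Nat.lt_succ_of_lt hi)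
      obtain ⟨hpos, hge, _⟩ := ih hPn
      have hxnP : T^[n] a ≤ Pm := hP n (Nat.lt_succ_self n)
      obtain ⟨_, hp2, hp3, hp4⟩ := hstep _ hpos hxnP
      rw [Function.iterate_succ_apply']
      exact ⟨hp2, le_trans hge hp3, hp4⟩
  -- escape
  have hesc : ∃ n, Pm < T^[n] a := by
    by_contra hno
    push_neg at hno
    have hLPm : 0 < -(Real.log z - 2*Real.pi*t - Real.pi/3) := by
      have hlz : Real.log z < 0 := Real.log_neg hz hz1
      have ht1 : (1:ℝ) ≤ (t:ℝ) := by
        rw [htR]; linarith [(Nat.cast_nonneg t0 : (0:ℝ) ≤ (t0:ℝ))]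
      nlinarith
    have hκ : 0 < (2/Real.log 2) * a^2 * (-(Real.log z - 2*Real.pi*t - Real.pi/3)) := by
      have := c_pos; positivity
    have hlin : ∀ n : ℕ, a + n * ((2/Real.log 2) * a^2 * (-(Real.log z - 2*Real.pi*t - Real.pi/3)))
        ≤ T^[n] a := by
      intro n
      induction n with
      | zero => simp
      | succ n ih =>
        have hpos := (horb n (fun i _ => hno i)).1
        have hge := (horb n (fun i _ => hno i)).2.1
        have hxnP : T^[n] a ≤ Pm := hno n
        obtain ⟨hTv, _, _, _⟩ := hstep _ hpos hxnP
        have hv1 : T^[n] a < 1 := by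
          have : Pm < 1 := lt_trans (lt_trans hPmPb hPbz) hz1
          linarith
        have hlogle : Real.log (T^[n] a) ≤ Real.log z - 2*Real.pi*t - Real.pi/3 := by
          have := Real.log_le_log hpos hxnP
          rw [hPm_def, Real.log_exp] at this
          exact this
        have hstepge : T^[n] a +
            (2/Real.log 2) * a^2 * (-(Real.log z - 2*Real.pi*t - Real.pi/3))
            ≤ T^[n+1] a := by
          rw [Function.iterate_succ_apply', hTv, Sf]
          have habs : |Real.log (T^[n] a)| = -Real.log (T^[n] a) :=
            abs_of_neg (Real.log_neg hpos hv1)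
          rw [habs]
          have h1 : a^2 ≤ (T^[n] a)^(2:ℕ) := by nlinarith
          have h2 : -(Real.log z - 2*Real.pi*t - Real.pi/3) ≤ -Real.log (T^[n] a) := by
            linarith
          have hc0 := c_pos
          have hL0 : 0 ≤ -Real.log (T^[n] a) := le_trans hLPm.le h2
          nlinarith [mul_le_mul h1 h2 hLPm.le (by positivity : (0:ℝ) ≤ (T^[n] a)^(2:ℕ))]
        rw [Nat.cast_add, Nat.cast_one]
        linarith
    obtain ⟨n, hn⟩ := exists_nat_gt ((Pm - a) /
      ((2/Real.log 2) * a^2 * (-(Real.log z - 2*Real.pi*t - Real.pi/3))))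
    have h1 := hlin n
    have h2 := hno n
    rw [div_lt_iff₀ hκ] at hn
    nlinarith
  -- first exceedance
  set N := Nat.find hesc with hN_def
  have hNspec : Pm < T^[N] a := Nat.find_spec hesc
  have hNmin : ∀ i, i < N → T^[i] a ≤ Pm := fun i hi => not_lt.mp (Nat.find_min hesc hi)
  obtain ⟨hxN0, hxNge, hxNle⟩ := horb N hNmin
  have horbz : ∀ i, i ≤ N → 0 < T^[i] a ∧ T^[i] a ≤ z := by
    intro i hi
    have h1 := horb i (fun j hj => hNmin j (lt_of_lt_of_le hj hi))
    exact ⟨h1.1, le_of_lt (lt_of_le_of_lt h1.2.2 hPbz)⟩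
  -- telescoping sum
  have htel : ∀ n, n ≤ N →
      (Finset.range n).sum (fun i => ff z (T^[i] a)) = Gg (T^[n] a) - Gg a := by
    intro n
    induction n with
    | zero => intro _; simp
    | succ n ih =>
      intro hn1
      have hn : n < N := lt_of_lt_of_le (Nat.lt_succ_self n) hn1
      have hpos := (horbz n (le_of_lt hn)).1
      have hlez := (horbz n (le_of_lt hn)).2
      obtain ⟨hTv, _, _, _⟩ := hstep _ hpos (hNmin n hn)
      rw [Finset.sum_range_succ, ih (le_of_lt hn), ff_low_eq hpos hlez,
        Function.iterate_succ_apply', hTv]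
      ring
  -- sub-action chain
  have hchain : ∀ n, n ≤ N →
      u a + (Finset.range n).sum (fun i => ff z (T^[i] a)) - n * ergMax T (ff z)
        ≤ u (T^[n] a) := by
    intro n
    induction n with
    | zero => intro _; simp
    | succ n ih =>
      intro hn1
      have hn : n < N := lt_of_lt_of_le (Nat.lt_succ_self n) hn1
      have hpos := (horbz n (le_of_lt hn)).1
      have hlez := (horbz n (le_of_lt hn)).2
      have hmem : T^[n] a ∈ Set.Icc (0:ℝ) 1 :=
        ⟨hpos.le, le_trans hlez (by linarith)⟩
      have hs := hsub _ hmem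
      have hih := ih (le_of_lt hn)
      rw [Finset.sum_range_succ, Function.iterate_succ_apply', Nat.cast_add, Nat.cast_one]
      linarith
  -- values of G at the endpoints
  have hGa : Gg a = -(1/2) := by
    rw [Gg, ha_def, Real.log_exp]
    rw [show Real.log z - 2*Real.pi*t - Real.pi
        = -Real.pi + ((-(M:ℤ)-(t:ℤ) : ℤ) : ℝ) * (2*Real.pi) by push_cast; rw [hw]; ring]
    rw [Real.cos_add_int_mul_two_pi, Real.cos_neg, Real.cos_pi]
    norm_num
  have hGxN : 1/4 ≤ Gg (T^[N] a) := by
    have hlog1 : Real.log z - 2*Real.pi*t - Real.pi/3 < Real.log (T^[N] a) := by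
      have := Real.log_lt_log (Real.exp_pos _) hNspec
      rw [Real.log_exp] at this
      exact this
    have hlog2 : Real.log (T^[N] a) ≤ Real.log z - 2*Real.pi*t + Real.pi/3 := by
      have := Real.log_le_log hxN0 hxNle
      rw [hPb_def, Real.log_exp] at this
      exact this
    have hcoseq : Real.cos (Real.log (T^[N] a))
        = Real.cos (Real.log (T^[N] a) - (Real.log z - 2*Real.pi*t)) := by
      have hper := Real.cos_add_int_mul_two_pi
        (Real.log (T^[N] a) - (Real.log z - 2*Real.pi*t)) ((-(M:ℤ))-(t:ℤ))
      rw [← hper]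
      congr 1
      push_cast
      rw [hw]
      ring
    have habs : |Real.log (T^[N] a) - (Real.log z - 2*Real.pi*t)| ≤ Real.pi/3 :=
      abs_le.mpr ⟨by linarith, by linarith⟩
    have hmono : Real.cos (Real.pi/3)
        ≤ Real.cos |Real.log (T^[N] a) - (Real.log z - 2*Real.pi*t)| :=
      Real.cos_le_cos_of_nonneg_of_le_pi (abs_nonneg _) (by linarith) habs
    rw [Real.cos_abs, Real.cos_pi_div_three] at hmono
    rw [Gg, hcoseq]
    linarith
  -- final contradiction
  have hfin := hchain N le_rfl
  rw [htel N le_rfl] at hfin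
  have hNm : (N:ℝ) * ergMax T (ff z) ≤ 0 := by
    have h := mul_nonneg (Nat.cast_nonneg N : (0:ℝ) ≤ (N:ℝ)) (neg_nonneg.mpr hm)
    rw [mul_neg] at h
    linarith
  have hgap : u a + 3/4 ≤ u (T^[N] a) := by
    have : Gg (T^[N] a) - Gg a ≥ 3/4 := by rw [hGa]; linarith
    linarith
  have hamem : a ∈ Set.Icc (0:ℝ) 1 := by
    constructor
    · exact ha0.le
    · have : a < z := lt_trans haPm (lt_trans hPmPb hPbz)
      linarith
  have hxNmem : T^[N] a ∈ Set.Icc (0:ℝ) 1 := by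
    constructor
    · exact hxN0.le
    · have : T^[N] a < z := lt_of_le_of_lt hxNle hPbz
      linarith
  have hda : dist a 0 < ρ := by
    rw [Real.dist_eq, sub_zero, abs_of_pos ha0]
    exact lt_trans (lt_trans haPm hPmPb) hPbρ
  have hdxN : dist (T^[N] a) 0 < ρ := by
    rw [Real.dist_eq, sub_zero, abs_of_pos hxN0]
    exact lt_of_le_of_lt hxNle hPbρ
  have h1 := hρ hamem hda
  have h2 := hρ hxNmem hdxN
  rw [Real.dist_eq] at h1 h2
  have h1' := abs_lt.mp h1
  have h2' := abs_lt.mp h2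
  linarith [h1'.1, h1'.2, h2'.1, h2'.2]

end NSA

theorem log_perturbation_no_continuous_subaction
    (T : ℝ → ℝ)
    (hTmaps : MapsTo T (Icc 0 1) (Icc 0 1))
    (hloc : ∃ ε > (0:ℝ), ∀ x ∈ Ioo (0:ℝ) ε,
      T x = x + (2 / Real.log 2) * x ^ (2:ℕ) * |Real.log x|)
    (k : ℝ) (hk : 0 < k)
    (ω : ℝ → ℝ) (hω : ConcaveModulus ω)
    (hωform : ∃ δ > (0:ℝ), ∀ h ∈ Ioo (0:ℝ) δ, ω h = h * (Real.log (1 / h ^ k) + 1)) :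
    ∃ f : ℝ → ℝ, MemCmod ω f ∧
      ¬ ∃ u : ℝ → ℝ, ContinuousOn u (Icc 0 1) ∧ IsSubaction T f u := by
  obtain ⟨eps, heps, hTf⟩ := hloc
  obtain ⟨δI, hδI, hωf⟩ := hωform
  have hπ := Real.pi_pos
  have hb : 0 < min (min (eps/2) (δI/2)) (Real.exp (-8)) :=
    lt_min (lt_min (by linarith) (by linarith)) (Real.exp_pos _)
  obtain ⟨M, hM⟩ := exists_nat_gt
    ((-Real.log (min (min (eps/2) (δI/2)) (Real.exp (-8)))) / (2*Real.pi))
  set z := Real.exp (-(2*Real.pi*M)) with hz_def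
  have hz : 0 < z := Real.exp_pos _
  have hwb : -(2*Real.pi*(M:ℝ)) < Real.log (min (min (eps/2) (δI/2)) (Real.exp (-8))) := by
    have h1 := (div_lt_iff₀ (by positivity : (0:ℝ) < 2*Real.pi)).mp hM
    nlinarith [h1]
  have hzb : z < min (min (eps/2) (δI/2)) (Real.exp (-8)) := by
    rw [hz_def]
    calc Real.exp (-(2*Real.pi*M)) < Real.exp (Real.log (min (min (eps/2) (δI/2)) (Real.exp (-8)))) :=
          Real.exp_lt_exp.mpr hwb
      _ = min (min (eps/2) (δI/2)) (Real.exp (-8)) := Real.exp_log hb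
  have hz8 : z ≤ Real.exp (-8) := le_trans hzb.le (min_le_right _ _)
  have hzeps : 2*z ≤ eps := by
    have h := le_trans hzb.le (le_trans (min_le_left _ _) (min_le_left _ _))
    linarith
  have hzδ : z < δI := by
    have h := le_trans hzb.le (le_trans (min_le_left _ _) (min_le_right _ _))
    linarith
  have hzw : Real.log z = -(2*Real.pi*M) := by rw [hz_def, Real.log_exp]
  have hcosz : Real.cos (Real.log z) = 1 := by
    rw [hzw, show -(2*Real.pi*(M:ℝ)) = ((-(M:ℤ) : ℤ) : ℝ) * (2*Real.pi) by push_cast; ring]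
    exact Real.cos_int_mul_two_pi _
  refine ⟨NSA.ff z, NSA.memcmod hz hz8 hcosz hk hω hωf hzδ, ?_⟩
  rintro ⟨u, hu, hsub⟩
  exact NSA.no_subaction hTf hz hz8 hzw hzeps hu hsub

end
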